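/- Let n ≥ 2 and let φ = (φ₁,…,φ_n) be an automorphism of the unit ball 𝔹_n ⊂ ℂⁿ such that φ maps 𝔹_n ∩ (ℂ∖{0})ⁿ into (ℂ∖{0})ⁿ. Then there exist a permutation σ of {1,…,n} and ζ₁,…,ζ_n ∈ 𝕋 such that φ(z₁,…,z_n) = (ζ₁z_{σ(1)}, …, ζ_n z_{σ(n)}) for all z ∈ 𝔹_n. -/

import Mathlib

open Finset

/-- The symmetrization map `π_n : ℂⁿ → ℂⁿ`, whose `k`-th component is the
`(k+1)`-st elementary symmetric polynomial of the coordinates. -/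
noncomputable def piMap (n : ℕ) (z : Fin n → ℂ) : Fin n → ℂ :=
  fun k => ∑ s ∈ Finset.powersetCard (k.1 + 1) Finset.univ, ∏ j ∈ s, z j

/-- The generalized complex ellipsoid `𝔹_{p,n} = {z : ∑ |z_j|^(2p) < 1}`. -/
noncomputable def ellipsoid (p : ℝ) (n : ℕ) : Set (Fin n → ℂ) :=
  {z | ∑ j, ‖z j‖ ^ (2 * p) < 1}

/-- The symmetrized `(p,n)`-ellipsoid `𝔼_{p,n} = π_n(𝔹_{p,n})`. -/
noncomputable def symEllipsoid (p : ℝ) (n : ℕ) : Set (Fin n → ℂ) :=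
  piMap n '' ellipsoid p n

/-- The Euclidean unit ball in `ℂⁿ`. -/
def unitBall (n : ℕ) : Set (Fin n → ℂ) :=
  {z | ∑ j, ‖z j‖ ^ 2 < 1}

/-- `f` is a proper holomorphic map from the domain `D` onto (into) the domain `G`:
it is holomorphic on `D`, maps `D` into `G`, and preimages of compact subsets of `G`
are compact. -/
def IsProperHolomorphic {n : ℕ} (f : (Fin n → ℂ) → (Fin n → ℂ))
    (D G : Set (Fin n → ℂ)) : Prop :=
  DifferentiableOn ℂ f D ∧ Set.MapsTo f D G ∧
    ∀ K : Set (Fin n → ℂ), K ⊆ G → IsCompact K → IsCompact (D ∩ f ⁻¹' K)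

/-- `φ` is an automorphism of the domain `D`: a holomorphic bijection of `D` onto
itself with holomorphic inverse. -/
def IsAutomorphismOf {n : ℕ} (φ : (Fin n → ℂ) → (Fin n → ℂ))
    (D : Set (Fin n → ℂ)) : Prop :=
  DifferentiableOn ℂ φ D ∧ Set.BijOn φ D D ∧
    ∃ ψ : (Fin n → ℂ) → (Fin n → ℂ), DifferentiableOn ℂ ψ D ∧ Set.InvOn ψ φ D D

/-- `f : ℂⁿ → ℂⁿ` is a polynomial mapping. -/
def IsPolynomialMap {n : ℕ} (f : (Fin n → ℂ) → (Fin n → ℂ)) : Prop :=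
  ∃ P : Fin n → MvPolynomial (Fin n) ℂ, ∀ z k, f z k = MvPolynomial.eval z (P k)

open Metric Set

namespace BAPN


variable {F : Type*} [NormedAddCommGroup F] [NormedSpace ℂ F]

/-- Identity theorem on a convex open set, via 1-dim slices. -/
lemma eq_zero_of_convex {U : Set F} (hUo : IsOpen U) (hUc : Convex ℝ U)
    {f : F → ℂ} (hf : DifferentiableOn ℂ f U)
    {y : F} {ρ : ℝ} (hρ : 0 < ρ) (hball : ball y ρ ⊆ U)
    (hzero : ∀ x ∈ ball y ρ, f x = 0) {x : F} (hx : x ∈ U) : f x = 0 := by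
  rcases eq_or_ne x y with rfl | hxy
  · exact hzero x (mem_ball_self hρ)
  set v := x - y with hv
  have hvne : v ≠ 0 := sub_ne_zero.mpr hxy
  set L : ℂ → F := fun lam => y + lam • v with hL
  set Ω : Set ℂ := L ⁻¹' U with hΩ
  have hLc : Continuous L := continuous_const.add (continuous_id.smul continuous_const)
  have hΩo : IsOpen Ω := hUo.preimage hLc
  have hΩconv : Convex ℝ Ω := by
    intro a ha b hb s t hs ht hst
    have : L (s • a + t • b) = s • L a + t • L b := by
      simp only [hL, smul_add, add_smul, ← smul_assoc]
      have : y = s • y + t • y := by rw [← add_smul, hst, one_smul]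
      nth_rewrite 1 [this]
      abel
    show L _ ∈ U
    rw [this]
    exact hUc ha hb hs ht hst
  have hgd : DifferentiableOn ℂ (f ∘ L) Ω := by
    apply hf.comp
    · exact (differentiable_const y |>.add (differentiable_id.smul_const v)).differentiableOn
    · exact fun a ha => ha
  have hga : AnalyticOnNhd ℂ (f ∘ L) Ω := hgd.analyticOnNhd hΩo
  have h0 : (0 : ℂ) ∈ Ω := by
    show L 0 ∈ U
    simp only [hL, zero_smul, add_zero]
    exact hball (mem_ball_self hρ)
  have h1 : (1 : ℂ) ∈ Ω := by
    show L 1 ∈ U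
    simp only [hL, one_smul, hv]
    simpa using hx
  have hev : f ∘ L =ᶠ[nhds (0 : ℂ)] 0 := by
    have : ball (0 : ℂ) (ρ / ‖v‖) ∈ nhds (0 : ℂ) :=
      ball_mem_nhds _ (div_pos hρ (norm_pos_iff.mpr hvne))
    filter_upwards [this] with lam hlam
    apply hzero
    have : ‖lam • v‖ < ρ := by
      rw [norm_smul]
      rw [mem_ball_zero_iff] at hlam
      calc ‖lam‖ * ‖v‖ < (ρ / ‖v‖) * ‖v‖ := by
            exact mul_lt_mul_of_pos_right hlam (norm_pos_iff.mpr hvne)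
        _ = ρ := div_mul_cancel₀ _ (norm_ne_zero_iff.mpr hvne)
    simpa [hL, dist_eq_norm] using this
  have := hga.eqOn_zero_of_preconnected_of_eventuallyEq_zero hΩconv.isPreconnected h0 hev
  have := this h1
  simpa [hL, hv] using this

/-- If a finite product of holomorphic functions vanishes on a ball inside a convex open set,
one of the factors vanishes identically. -/
lemma exists_factor_eq_zero {U : Set F} (hUo : IsOpen U) (hUc : Convex ℝ U)
    {ι : Type*} (s : Finset ι) (g : ι → F → ℂ) (hg : ∀ m ∈ s, DifferentiableOn ℂ (g m) U) :
    ∀ y ρ, 0 < ρ → ball y ρ ⊆ U → (∀ x ∈ ball y ρ, ∏ m ∈ s, g m x = 0) →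
      ∃ m ∈ s, ∀ x ∈ U, g m x = 0 := by
  classical
  induction s using Finset.induction_on with
  | empty =>
    intro y ρ hρ hball hz
    exact absurd (hz y (mem_ball_self hρ)) (by simp)
  | @insert a s ha ih =>
    intro y ρ hρ hball hz
    by_cases hcase : ∀ x ∈ ball y ρ, g a x = 0
    · exact ⟨a, Finset.mem_insert_self a s,
        fun x hx => eq_zero_of_convex hUo hUc (hg a (Finset.mem_insert_self a s)) hρ hball hcase hx⟩
    · push_neg at hcase
      obtain ⟨x₀, hx₀, hgx₀⟩ := hcase
      have hcont : ContinuousAt (g a) x₀ :=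
        ((hg a (Finset.mem_insert_self a s)).continuousOn.continuousAt
          (hUo.mem_nhds (hball hx₀)))
      have hev : ∀ᶠ x in nhds x₀, g a x ≠ 0 ∧ x ∈ ball y ρ := by
        filter_upwards [hcont.eventually_ne hgx₀, isOpen_ball.mem_nhds hx₀] with x h1 h2
        exact ⟨h1, h2⟩
      rw [Metric.eventually_nhds_iff_ball] at hev
      obtain ⟨ρ', hρ', hb'⟩ := hev
      have hz' : ∀ x ∈ ball x₀ ρ', ∏ m ∈ s, g m x = 0 := by
        intro x hx
        have h1 := (hb' x hx).1
        have h2 := hz x (hb' x hx).2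
        rw [Finset.prod_insert ha] at h2
        exact (mul_eq_zero.mp h2).resolve_left h1
      obtain ⟨m, hm, hmz⟩ := ih (fun m hm => hg m (Finset.mem_insert_of_mem hm)) x₀ ρ' hρ'
        (fun x hx => hball (hb' x hx).2) hz'
      exact ⟨m, Finset.mem_insert_of_mem hm, hmz⟩



noncomputable def toE (n : ℕ) : (Fin n → ℂ) ≃L[ℂ] EuclideanSpace ℂ (Fin n) :=
  (PiLp.continuousLinearEquiv 2 ℂ (fun _ : Fin n => ℂ)).symm

lemma norm_toE (n : ℕ) (z : Fin n → ℂ) : ‖toE n z‖ = Real.sqrt (∑ j, ‖z j‖ ^ 2) := by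
  rw [EuclideanSpace.norm_eq]; rfl

lemma mem_unitBall_iff {n : ℕ} (z : Fin n → ℂ) : z ∈ unitBall n ↔ ‖toE n z‖ < 1 := by
  rw [norm_toE, Real.sqrt_lt' one_pos, one_pow]
  rfl

lemma unitBall_eq (n : ℕ) : unitBall n = (toE n) ⁻¹' (ball 0 1) := by
  ext z
  rw [mem_unitBall_iff, Set.mem_preimage, mem_ball_zero_iff]

lemma isOpen_unitBall (n : ℕ) : IsOpen (unitBall n) := by
  rw [unitBall_eq]
  exact isOpen_ball.preimage (toE n).continuous

lemma convex_unitBall (n : ℕ) : Convex ℝ (unitBall n) := by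
  rw [unitBall_eq]
  exact (convex_ball (0 : EuclideanSpace ℂ (Fin n)) 1).is_linear_preimage
    ((toE n).toLinearEquiv.toLinearMap.restrictScalars ℝ).isLinear

lemma zero_mem_unitBall (n : ℕ) : (0 : Fin n → ℂ) ∈ unitBall n := by
  rw [mem_unitBall_iff]
  simp

lemma norm_toE_single {n : ℕ} (i : Fin n) (a : ℂ) : ‖toE n (Pi.single i a)‖ = ‖a‖ := by
  rw [norm_toE]
  have : ∀ j : Fin n, ‖(Pi.single i a : Fin n → ℂ) j‖ ^ 2 = if j = i then ‖a‖ ^ 2 else 0 := by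
    intro j
    rcases eq_or_ne j i with rfl | hj
    · simp
    · simp [Pi.single_eq_of_ne hj, hj]
  rw [Finset.sum_congr rfl (fun j _ => this j), Finset.sum_ite_eq' Finset.univ i]
  simp [Real.sqrt_sq (norm_nonneg a)]

lemma norm_toE_smul {n : ℕ} (t : ℂ) (z : Fin n → ℂ) : ‖toE n (t • z)‖ = ‖t‖ * ‖toE n z‖ := by
  rw [map_smul, norm_smul]



variable {n : ℕ} {φ ψ : (Fin n → ℂ) → (Fin n → ℂ)}

lemma psi_props (hbij : Set.BijOn φ (unitBall n) (unitBall n))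
    (hinv : Set.InvOn ψ φ (unitBall n) (unitBall n))
    (h : ∀ z ∈ unitBall n, (∀ j, z j ≠ 0) → ∀ j, φ z j ≠ 0) :
    ∀ w ∈ unitBall n, ψ w ∈ unitBall n ∧ ((∃ k, w k = 0) → ∃ k, ψ w k = 0) := by
  intro w hw
  obtain ⟨v, hv, hvw⟩ := hbij.2.2 hw
  have hψw : ψ w = v := by rw [← hvw, hinv.1 hv]
  constructor
  · rw [hψw]; exact hv
  · rintro ⟨k, hk⟩
    by_contra hcon
    push_neg at hcon
    rw [hψw] at hcon
    have := h v hv hcon k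
    rw [hvw] at this
    exact this hk

/-- The slicing step: on each coordinate hyperplane, some component of ψ vanishes. -/
lemma exists_tau (hψd : DifferentiableOn ℂ ψ (unitBall n))
    (hψV : ∀ w ∈ unitBall n, (∃ k, w k = 0) → ∃ k, ψ w k = 0) (k : Fin n) :
    ∃ m, ∀ z ∈ unitBall n, z k = 0 → ψ z m = 0 := by
  classical
  set Ek : (Fin n → ℂ) → (Fin n → ℂ) := fun w j => if j = k then 0 else w j with hEk
  have hEklin : IsLinearMap ℝ Ek := by
    constructor
    · intro a b; funext j; by_cases hj : j = k <;> simp [hEk, hj]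
    · intro t a; funext j; by_cases hj : j = k <;> simp [hEk, hj]
  have hEkdiff : Differentiable ℂ Ek := by
    rw [differentiable_pi]
    intro j
    by_cases hj : j = k
    · simp only [hEk, hj, if_true]; exact differentiable_const 0
    · simp only [hEk, hj, if_false]; exact differentiable_apply j
  set U : Set (Fin n → ℂ) := Ek ⁻¹' (unitBall n) with hU
  have hUo : IsOpen U := (isOpen_unitBall n).preimage hEkdiff.continuous
  have hUc : Convex ℝ U := (convex_unitBall n).is_linear_preimage hEklin
  have h0U : (0 : Fin n → ℂ) ∈ U := by
    have : Ek 0 = 0 := by funext j; by_cases hj : j = k <;> simp [hEk, hj]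
    simp only [hU, Set.mem_preimage, this]
    exact zero_mem_unitBall n
  obtain ⟨ρ, hρ, hballU⟩ := Metric.isOpen_iff.mp hUo 0 h0U
  set g : Fin n → (Fin n → ℂ) → ℂ := fun m w => ψ (Ek w) m with hg
  have hgd : ∀ m ∈ Finset.univ, DifferentiableOn ℂ (g m) U := by
    intro m _
    exact (ContinuousLinearMap.proj (R := ℂ) (φ := fun _ : Fin n => ℂ) m).differentiable.comp_differentiableOn
      (hψd.comp hEkdiff.differentiableOn (fun w hw => hw))
  have hprod : ∀ x ∈ ball (0 : Fin n → ℂ) ρ, ∏ m, g m x = 0 := by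
    intro x hx
    have hxU : x ∈ U := hballU hx
    have hEkx : Ek x ∈ unitBall n := hxU
    have hzero : Ek x k = 0 := by simp [hEk]
    obtain ⟨m, hm⟩ := hψV (Ek x) hEkx ⟨k, hzero⟩
    exact Finset.prod_eq_zero (Finset.mem_univ m) hm
  obtain ⟨m, _, hmz⟩ := exists_factor_eq_zero hUo hUc Finset.univ g hgd 0 ρ hρ hballU hprod
  refine ⟨m, fun z hz hzk => ?_⟩
  have hEkz : Ek z = z := by
    funext j; by_cases hj : j = k
    · simp [hEk, hj, hzk.symm, hj ▸ hzk.symm]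
    · simp [hEk, hj]
  have hzU : z ∈ U := by simp only [hU, Set.mem_preimage, hEkz]; exact hz
  have := hmz z hzU
  simp only [hg] at this
  rwa [hEkz] at this




variable {n : ℕ}

lemma norm_real_cast (r : ℝ) (hr : 0 < r) : ‖((r : ℂ))‖ = r := by
  rw [Complex.norm_real, Real.norm_eq_abs, abs_of_pos hr]

section setup

variable (θ : (Fin n → ℂ) → (Fin n → ℂ)) (hd : DifferentiableOn ℂ θ (unitBall n))
  (hmaps : MapsTo θ (unitBall n) (unitBall n)) (h0 : θ 0 = 0)
  {z : Fin n → ℂ} (hz : z ∈ unitBall n) (hz0 : z ≠ 0)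

lemma schwarz_le (θ : (Fin n → ℂ) → (Fin n → ℂ)) (hd : DifferentiableOn ℂ θ (unitBall n))
    (hmaps : MapsTo θ (unitBall n) (unitBall n)) (h0 : θ 0 = 0)
    {z : Fin n → ℂ} (hz : z ∈ unitBall n) :
    ‖toE n (θ z)‖ ≤ ‖toE n z‖ := by
  rcases eq_or_ne z 0 with rfl | hz0
  · simp [h0]
  set r : ℝ := ‖toE n z‖ with hr
  have hr0 : 0 < r := norm_pos_iff.mpr (fun hcon => hz0 (by
    have := (toE n).injective (hcon.trans (map_zero (toE n)).symm)
    exact this))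
  have hr1 : r < 1 := (mem_unitBall_iff z).mp hz
  have hrC : ((r : ℂ)) ≠ 0 := by
    simpa using hr0.ne'
  set w : Fin n → ℂ := ((r : ℂ))⁻¹ • z with hw
  have hnw : ‖toE n w‖ = 1 := by
    rw [hw, norm_toE_smul, norm_inv, norm_real_cast r hr0, inv_mul_cancel₀ hr0.ne']
  have hmem : ∀ lam ∈ ball (0 : ℂ) 1, lam • w ∈ unitBall n := by
    intro lam hlam
    rw [mem_unitBall_iff, norm_toE_smul, hnw, mul_one]
    exact mem_ball_zero_iff.mp hlam
  set F : ℂ → EuclideanSpace ℂ (Fin n) := fun lam => toE n (θ (lam • w)) with hF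
  have hFd : DifferentiableOn ℂ F (ball 0 1) :=
    ((toE n).toContinuousLinearMap.differentiable.comp_differentiableOn
      (hd.comp (differentiable_id.smul_const w).differentiableOn hmem))
  have hF0 : F 0 = 0 := by
    simp [hF, h0]
  have hFmaps : MapsTo F (ball 0 1) (ball (F 0) 1) := by
    rw [hF0]
    intro lam hlam
    rw [mem_ball_zero_iff]
    exact (mem_unitBall_iff _).mp (hmaps (hmem lam hlam))
  have hrmem : ((r : ℂ)) ∈ ball (0 : ℂ) 1 := by
    rw [mem_ball_zero_iff, norm_real_cast r hr0]; exact hr1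
  have key := Complex.dist_le_div_mul_dist_of_mapsTo_ball hFd (hFmaps.mono_right ball_subset_closedBall) hrmem
  rw [hF0, dist_zero_right, dist_zero_right, norm_real_cast r hr0, one_div_one, one_mul] at key
  have hrw : ((r : ℂ)) • w = z := by
    rw [hw, smul_smul, mul_inv_cancel₀ hrC, one_smul]
  have key2 : ‖toE n (θ (((r : ℂ)) • w))‖ ≤ r := key
  rwa [hrw] at key2

lemma linearize (θ : (Fin n → ℂ) → (Fin n → ℂ)) (hd : DifferentiableOn ℂ θ (unitBall n))
    (hmaps : MapsTo θ (unitBall n) (unitBall n)) (h0 : θ 0 = 0)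
    (heq : ∀ z ∈ unitBall n, ‖toE n (θ z)‖ = ‖toE n z‖)
    {S : (Fin n → ℂ) →L[ℂ] (Fin n → ℂ)} (hS : HasFDerivAt θ S 0)
    {z : Fin n → ℂ} (hz : z ∈ unitBall n) :
    θ z = S z := by
  rcases eq_or_ne z 0 with rfl | hz0
  · simp [h0]
  set r : ℝ := ‖toE n z‖ with hr
  have hr0 : 0 < r := norm_pos_iff.mpr (fun hcon => hz0 (by
    have := (toE n).injective (hcon.trans (map_zero (toE n)).symm)
    exact this))
  have hr1 : r < 1 := (mem_unitBall_iff z).mp hz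
  have hrC : ((r : ℂ)) ≠ 0 := by simpa using hr0.ne'
  set w : Fin n → ℂ := ((r : ℂ))⁻¹ • z with hw
  have hnw : ‖toE n w‖ = 1 := by
    rw [hw, norm_toE_smul, norm_inv, norm_real_cast r hr0, inv_mul_cancel₀ hr0.ne']
  have hmem : ∀ lam ∈ ball (0 : ℂ) 1, lam • w ∈ unitBall n := by
    intro lam hlam
    rw [mem_unitBall_iff, norm_toE_smul, hnw, mul_one]
    exact mem_ball_zero_iff.mp hlam
  set F : ℂ → EuclideanSpace ℂ (Fin n) := fun lam => toE n (θ (lam • w)) with hF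
  have hFd : DifferentiableOn ℂ F (ball 0 1) :=
    ((toE n).toContinuousLinearMap.differentiable.comp_differentiableOn
      (hd.comp (differentiable_id.smul_const w).differentiableOn hmem))
  have hF0 : F 0 = 0 := by simp [hF, h0]
  have hFmaps : MapsTo F (ball 0 1) (ball (F 0) 1) := by
    rw [hF0]
    intro lam hlam
    rw [mem_ball_zero_iff]
    exact (mem_unitBall_iff _).mp (hmaps (hmem lam hlam))
  have hrmem : ((r : ℂ)) ∈ ball (0 : ℂ) 1 := by
    rw [mem_ball_zero_iff, norm_real_cast r hr0]; exact hr1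
  have hrw : ((r : ℂ)) • w = z := by
    rw [hw, smul_smul, mul_inv_cancel₀ hrC, one_smul]
  have hFr : F (r : ℂ) = toE n (θ z) := by
    show toE n (θ (((r : ℂ)) • w)) = _
    rw [hrw]
  have hnormFr : ‖F (r : ℂ)‖ = r := by rw [hFr, heq z hz]
  have hds : ‖dslope F 0 ((r : ℂ))‖ = 1 / 1 := by
    rw [dslope_of_ne F hrC, slope_def_module, hF0, sub_zero, sub_zero, norm_smul, norm_inv,
      norm_real_cast r hr0, hnormFr, inv_mul_cancel₀ hr0.ne']
    norm_num
  have haff := Complex.affine_of_mapsTo_ball_of_exists_norm_dslope_eq_div hFd (hFmaps.mono_right ball_subset_closedBall) hrmem hds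
  set C := dslope F 0 ((r : ℂ)) with hC
  have hinner : HasDerivAt (fun lam : ℂ => lam • w) w 0 := by
    simpa using (hasDerivAt_id (0 : ℂ)).smul_const w
  have hS' : HasFDerivAt θ S ((0 : ℂ) • w) := by rwa [zero_smul]
  have hmid := hS'.comp_hasDerivAt 0 hinner
  have hD1 : HasDerivAt F (toE n (S w)) 0 :=
    ((toE n).toContinuousLinearMap.hasFDerivAt).comp_hasDerivAt 0 hmid
  have haffd : HasDerivAt (fun lam : ℂ => F 0 + (lam - 0) • C) C 0 := by
    simpa using (((hasDerivAt_id (0 : ℂ)).sub_const 0).smul_const C).const_add (F 0)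
  have hev : F =ᶠ[nhds (0 : ℂ)] (fun lam => F 0 + (lam - 0) • C) := by
    filter_upwards [ball_mem_nhds (0 : ℂ) one_pos] with lam hlam
    exact haff hlam
  have hD2 : HasDerivAt F C 0 := haffd.congr_of_eventuallyEq hev
  have hCval : toE n (S w) = C := hD1.unique hD2
  have hfinal := haff hrmem
  simp only [hF0, zero_add, sub_zero] at hfinal
  rw [hFr, ← hCval, ← map_smul, ← map_smul, hrw] at hfinal
  exact (toE n).injective hfinal

end setup

end BAPN

/-- An automorphism of the unit ball `𝔹_n` mapping `𝔹_n ∩ (ℂ∖{0})ⁿ` into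
`(ℂ∖{0})ⁿ` is, up to a permutation of the variables, a rotation in each
coordinate. -/
theorem ball_automorphism_preserving_nonzero (n : ℕ) (hn : 2 ≤ n)
    (φ : (Fin n → ℂ) → (Fin n → ℂ)) (hφ : IsAutomorphismOf φ (unitBall n))
    (h : ∀ z ∈ unitBall n, (∀ j, z j ≠ 0) → ∀ j, φ z j ≠ 0) :
    ∃ (σ : Equiv.Perm (Fin n)) (ζ : Fin n → ℂ), (∀ j, ‖ζ j‖ = 1) ∧
      ∀ z ∈ unitBall n, ∀ j, φ z j = ζ j * z (σ j) := by
  classical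
  obtain ⟨hφd, hbij, ψ, hψd, hinv⟩ := hφ
  have hψprops := BAPN.psi_props hbij hinv h
  have hψmaps : Set.MapsTo ψ (unitBall n) (unitBall n) := fun w hw => (hψprops w hw).1
  have hψV : ∀ w ∈ unitBall n, (∃ k, w k = 0) → ∃ k, ψ w k = 0 := fun w hw => (hψprops w hw).2
  choose τ hτ using BAPN.exists_tau hψd hψV
  have h0B : (0 : Fin n → ℂ) ∈ unitBall n := BAPN.zero_mem_unitBall n
  have hnhds : unitBall n ∈ nhds (0 : Fin n → ℂ) := (BAPN.isOpen_unitBall n).mem_nhds h0B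
  have hψat : DifferentiableAt ℂ ψ 0 := hψd.differentiableAt hnhds
  set T := fderiv ℂ ψ 0 with hTdef
  have hψfd : HasFDerivAt ψ T 0 := hψat.hasFDerivAt
  -- vanishing of derivative entries
  have hTsingle : ∀ k i, i ≠ k → T (Pi.single i 1) (τ k) = 0 := by
    intro k i hik
    set e : Fin n → ℂ := Pi.single i 1 with he
    have hmem : ∀ t ∈ ball (0 : ℂ) 1, t • e ∈ unitBall n := by
      intro t ht
      rw [BAPN.mem_unitBall_iff, BAPN.norm_toE_smul, BAPN.norm_toE_single]
      simpa using mem_ball_zero_iff.mp ht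
    have hcoord : ∀ t : ℂ, (t • e) k = 0 := by
      intro t
      have : e k = 0 := Pi.single_eq_of_ne (Ne.symm hik) 1
      simp [this]
    have hinner : HasDerivAt (fun t : ℂ => t • e) e 0 := by
      simpa using (hasDerivAt_id (0 : ℂ)).smul_const e
    have hψfd' : HasFDerivAt ψ T ((0 : ℂ) • e) := by rwa [zero_smul]
    have hmid := hψfd'.comp_hasDerivAt 0 hinner
    have hD1 : HasDerivAt (fun t : ℂ => ψ (t • e) (τ k)) (T e (τ k)) 0 :=
      ((ContinuousLinearMap.proj (R := ℂ) (φ := fun _ : Fin n => ℂ)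
        (τ k)).hasFDerivAt).comp_hasDerivAt 0 hmid
    have hev : (fun t : ℂ => ψ (t • e) (τ k)) =ᶠ[nhds (0 : ℂ)] fun _ => 0 := by
      filter_upwards [ball_mem_nhds (0 : ℂ) one_pos] with t ht
      exact hτ k (t • e) (hmem t ht) (hcoord t)
    have hD2 : HasDerivAt (fun t : ℂ => ψ (t • e) (τ k)) 0 0 :=
      (hasDerivAt_const (0 : ℂ) (0 : ℂ)).congr_of_eventuallyEq hev
    exact hD1.unique hD2
  -- invertibility of T
  have hbmem : ψ 0 ∈ unitBall n := hψmaps h0B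
  have hφb : φ (ψ 0) = 0 := hinv.2 h0B
  have hφatb : DifferentiableAt ℂ φ (ψ 0) :=
    hφd.differentiableAt ((BAPN.isOpen_unitBall n).mem_nhds hbmem)
  set S := fderiv ℂ φ (ψ 0) with hSdef
  have hφfdb : HasFDerivAt φ S (ψ 0) := hφatb.hasFDerivAt
  have hev1 : (fun w => φ (ψ w)) =ᶠ[nhds (0 : Fin n → ℂ)] id := by
    filter_upwards [hnhds] with w hw
    exact hinv.2 hw
  have hcomp1 : HasFDerivAt (fun w => φ (ψ w)) (S.comp T) 0 := hφfdb.comp 0 hψfd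
  have hid1 : HasFDerivAt (fun w => φ (ψ w)) (ContinuousLinearMap.id ℂ _) 0 :=
    (hasFDerivAt_id 0).congr_of_eventuallyEq hev1
  have hST : S.comp T = ContinuousLinearMap.id ℂ _ := hcomp1.unique hid1
  have hψfd0 : HasFDerivAt ψ T (φ (ψ 0)) := by rwa [hφb]
  have hev2 : (fun w => ψ (φ w)) =ᶠ[nhds (ψ 0)] id := by
    filter_upwards [(BAPN.isOpen_unitBall n).mem_nhds hbmem] with w hw
    exact hinv.1 hw
  have hcomp2 : HasFDerivAt (fun w => ψ (φ w)) (T.comp S) (ψ 0) := hψfd0.comp (ψ 0) hφfdb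
  have hid2 : HasFDerivAt (fun w => ψ (φ w)) (ContinuousLinearMap.id ℂ _) (ψ 0) :=
    (hasFDerivAt_id _).congr_of_eventuallyEq hev2
  have hTS : T.comp S = ContinuousLinearMap.id ℂ _ := hcomp2.unique hid2
  have hSTv : ∀ v, S (T v) = v := by
    intro v
    have := DFunLike.congr_fun hST v
    simpa using this
  have hTSv : ∀ v, T (S v) = v := by
    intro v
    have := DFunLike.congr_fun hTS v
    simpa using this
  -- expansion of T
  have hrepr : ∀ v : Fin n → ℂ, v = ∑ i, v i • (Pi.single i (1 : ℂ) : Fin n → ℂ) := by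
    intro v
    nth_rewrite 1 [← Finset.univ_sum_single v]
    refine Finset.sum_congr rfl fun i _ => ?_
    funext j
    by_cases hj : j = i <;> simp [Pi.single_apply, hj]
  have hexp : ∀ (v : Fin n → ℂ) (m : Fin n), T v m = ∑ i, v i * T (Pi.single i 1) m := by
    intro v m
    conv_lhs => rw [hrepr v]
    rw [map_sum]
    simp [Finset.sum_apply, smul_eq_mul]
  -- τ injective
  have hinj : Function.Injective τ := by
    intro k1 k2 heqτ
    by_contra hne
    have hall : ∀ i, T (Pi.single i 1) (τ k1) = 0 := by
      intro i
      by_cases hik : i = k1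
      · subst hik
        rw [heqτ]
        exact hTsingle k2 i (fun hcon => hne (hcon ▸ rfl))
      · exact hTsingle k1 i hik
    have hzero : T (S (Pi.single (τ k1) 1)) (τ k1) = 0 := by
      rw [hexp]
      simp [hall]
    rw [hTSv] at hzero
    simp at hzero
  have hsurj : Function.Surjective τ := Finite.surjective_of_injective hinj
  -- fixed point
  have hψ0 : ψ 0 = 0 := by
    funext m
    obtain ⟨k, rfl⟩ := hsurj m
    exact hτ k 0 h0B rfl
  have hφ0 : φ 0 = 0 := by rw [hψ0] at hφb; exact hφb
  rw [hψ0] at hφfdb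
  -- the diagonal coefficients
  set c : Fin n → ℂ := fun i => T (Pi.single i 1) (τ i) with hcdef
  have hc : ∀ i, c i ≠ 0 := by
    intro i hci
    have hTei : T (Pi.single i 1) = 0 := by
      funext m
      obtain ⟨k, rfl⟩ := hsurj m
      by_cases hik : i = k
      · subst hik; exact hci
      · exact hTsingle k i hik
    have h1 := hSTv (Pi.single i 1)
    rw [hTei, map_zero] at h1
    have h2 := congrFun h1 i
    simp at h2
  have hSv : ∀ (w : Fin n → ℂ) (i : Fin n), S w i = (c i)⁻¹ * w (τ i) := by
    intro w i
    have hTSw := congrFun (hTSv w) (τ i)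
    rw [hexp] at hTSw
    have hsum : ∑ j, S w j * T (Pi.single j 1) (τ i) = S w i * c i :=
      Finset.sum_eq_single i (fun j _ hji => by rw [hTsingle i j hji, mul_zero])
        (fun habs => absurd (Finset.mem_univ i) habs)
    rw [hsum] at hTSw
    rw [← hTSw, mul_comm (S w i) (c i), inv_mul_cancel_left₀ (hc i)]
  -- norm preservation and linearity
  have hφmaps : Set.MapsTo φ (unitBall n) (unitBall n) := hbij.1
  have hnormeq : ∀ z ∈ unitBall n, ‖BAPN.toE n (φ z)‖ = ‖BAPN.toE n z‖ := by
    intro z hz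
    refine le_antisymm (BAPN.schwarz_le φ hφd hφmaps hφ0 hz) ?_
    have h2 := BAPN.schwarz_le ψ hψd hψmaps hψ0 (hφmaps hz)
    rwa [hinv.1 hz] at h2
  have hlin : ∀ z ∈ unitBall n, φ z = S z := fun z hz =>
    BAPN.linearize φ hφd hφmaps hφ0 hnormeq hφfdb hz
  -- conclusion
  refine ⟨Equiv.ofBijective τ ⟨hinj, hsurj⟩, fun i => (c i)⁻¹, ?_, ?_⟩
  · intro j
    set z : Fin n → ℂ := Pi.single (τ j) ((1 / 2 : ℝ) : ℂ) with hzdef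
    have hzB : z ∈ unitBall n := by
      rw [hzdef, BAPN.mem_unitBall_iff, BAPN.norm_toE_single, Complex.norm_real]
      norm_num
    have hφz : φ z = Pi.single j ((c j)⁻¹ * ((1 / 2 : ℝ) : ℂ)) := by
      rw [hlin z hzB]
      funext i
      rw [hSv]
      by_cases hij : i = j
      · subst hij
        simp [hzdef, Pi.single_apply]
      · have hττ : τ i ≠ τ j := fun hcon => hij (hinj hcon)
        rw [hzdef]
        simp [Pi.single_apply, hττ, hij]
    have h1 := hnormeq z hzB
    rw [hφz, hzdef, BAPN.norm_toE_single, BAPN.norm_toE_single, norm_mul] at h1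
    have h2 : ‖((1 / 2 : ℝ) : ℂ)‖ ≠ 0 := by simp
    show ‖(c j)⁻¹‖ = 1
    exact mul_right_cancel₀ h2 (h1.trans (one_mul _).symm)
  · intro z hz j
    rw [hlin z hz, hSv]
    rfl
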